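/- Let x ∈ ℝ^n and let φ(x) ∈ ℝ^M be the vector of all monomials x^α with 1 ≤ |α| ≤ d, where M = ∑_{q=1}^{d} C(n+q-1, q). Then the number of nonzero entries of φ(x) satisfies ‖φ(x)‖_0 / M ≤ ‖x‖_0 / n. -/

import Mathlib

open Finset

lemma card_piAntidiag_univ (k q : ℕ) :
    (Finset.piAntidiag (univ : Finset (Fin k)) q).card = Nat.multichoose k q := by
  rw [← Finset.map_sym_eq_piAntidiag, Finset.card_map, Finset.sym_univ, ← Fintype.card,
    Sym.card_sym_eq_multichoose, Fintype.card_fin]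

lemma card_piAntidiag (n q : ℕ) (K : Finset (Fin n)) :
    (Finset.piAntidiag K q).card = Nat.multichoose K.card q := by
  classical
  rw [← card_piAntidiag_univ K.card q]
  set e := K.equivFin with he
  refine Finset.card_bij' (fun f _ => fun m => f ↑(e.symm m))
    (fun g _ => fun j => if h : j ∈ K then g (e ⟨j, h⟩) else 0) ?hi ?hj ?li ?ri
  case hi =>
    intro f hf
    rw [mem_piAntidiag] at hf ⊢
    refine ⟨?_, by simp⟩
    calc univ.sum (fun m => f ↑(e.symm m)) = ∑ j : K, f ↑j :=
          Equiv.sum_comp e.symm (fun (j : K) => f ↑j)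
      _ = K.sum f := Finset.sum_coe_sort K f
      _ = q := hf.1
  case hj =>
    intro g hg
    rw [mem_piAntidiag] at hg ⊢
    constructor
    · calc K.sum (fun j => if h : j ∈ K then g (e ⟨j, h⟩) else 0)
          = ∑ j : K, g (e ⟨j.1, j.2⟩) := Finset.sum_dite_of_true (fun j hj => hj) _ _
        _ = ∑ j : K, g (e j) := rfl
        _ = univ.sum g := Equiv.sum_comp e (fun m => g m)
        _ = q := hg.1
    · intro j hj
      by_contra hK
      simp [hK] at hj
  case li =>
    intro f hf
    funext j
    rw [mem_piAntidiag] at hf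
    by_cases h : j ∈ K
    · simp [h]
    · simp [h, not_imp_comm.1 (hf.2 j) h]
  case ri =>
    intro g hg
    funext m
    simp

lemma mc_ineq (k n q : ℕ) (hk : k ≤ n) (hq : 1 ≤ q) :
    n * Nat.multichoose k q ≤ k * Nat.multichoose n q := by
  obtain ⟨r, rfl⟩ : ∃ r, q = r + 1 := ⟨q - 1, by omega⟩
  rcases Nat.eq_zero_or_pos k with rfl | hk0
  · simp [Nat.multichoose_zero_succ]
  rw [Nat.multichoose_eq, Nat.multichoose_eq]
  have h1 : k + (r + 1) - 1 = k + r := by omega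
  have h2 : n + (r + 1) - 1 = n + r := by omega
  rw [h1, h2]
  apply Nat.le_of_mul_le_mul_right (c := r + 1) _ (by omega)
  have e1 : n * (k + r).choose (r + 1) * (r + 1) = n * ((k + r).choose r * k) := by
    rw [Nat.mul_assoc, Nat.choose_succ_right_eq]
    congr 2
    omega
  have e2 : k * (n + r).choose (r + 1) * (r + 1) = k * ((n + r).choose r * n) := by
    rw [Nat.mul_assoc, Nat.choose_succ_right_eq]
    congr 2
    omega
  rw [e1, e2]
  have := Nat.choose_le_choose r (Nat.add_le_add_right hk r)
  calc n * ((k + r).choose r * k) = (n * k) * (k + r).choose r := by ring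
    _ ≤ (n * k) * (n + r).choose r := Nat.mul_le_mul_left _ this
    _ = k * ((n + r).choose r * n) := by ring

lemma key_count (n d : ℕ) (K : Finset (Fin n)) :
    (((Fintype.piFinset fun _ : Fin n => Finset.range (d + 1)).filter
        (fun α => 1 ≤ ∑ j, α j ∧ ∑ j, α j ≤ d)).filter
      (fun α => ∀ j, α j ≠ 0 → j ∈ K)).card
      = ∑ q ∈ Finset.Icc 1 d, Nat.multichoose K.card q := by
  classical
  rw [Finset.card_eq_sum_card_fiberwise (f := fun α => ∑ j, α j) (t := Finset.Icc 1 d)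
    (by intro α hα
        simp only [mem_coe, mem_filter] at hα
        exact mem_Icc.mpr ⟨hα.1.2.1, hα.1.2.2⟩)]
  refine Finset.sum_congr rfl fun q hq => ?_
  rw [mem_Icc] at hq
  rw [← card_piAntidiag n q K]
  congr 1
  ext α
  simp only [mem_filter, Fintype.mem_piFinset, Finset.mem_range, mem_piAntidiag, ne_eq]
  constructor
  · rintro ⟨⟨⟨hlt, -, -⟩, hsupp⟩, hsum⟩
    refine ⟨?_, hsupp⟩
    rw [← hsum]
    exact Finset.sum_subset (Finset.subset_univ K)
      (fun j _ hj => by by_contra h; exact hj (hsupp j h))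
  · rintro ⟨hsum, hsupp⟩
    have hall : ∑ j, α j = q := by
      rw [← hsum]
      exact (Finset.sum_subset (Finset.subset_univ K)
        (fun j _ hj => by by_contra h; exact hj (hsupp j h))).symm
    refine ⟨⟨⟨fun j => ?_, by omega, by omega⟩, hsupp⟩, hall⟩
    have : α j ≤ ∑ i, α i := Finset.single_le_sum (fun i _ => Nat.zero_le _) (mem_univ j)
    omega

/-- The monomial lifting of `x` is at least as (relatively) sparse as `x`:
`‖φ(x)‖₀ / M ≤ ‖x‖₀ / n`, where `φ(x)` is the vector of monomials `x^α`,
`1 ≤ |α| ≤ d`. -/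
theorem monomial_lift_sparsity (n d : ℕ) (hn : 0 < n) (hd : 0 < d)
    (x : Fin n → ℝ) :
    let S : Finset (Fin n → ℕ) :=
      (Fintype.piFinset fun _ => Finset.range (d + 1)).filter
        (fun α => 1 ≤ ∑ j, α j ∧ ∑ j, α j ≤ d)
    n * (S.filter (fun α => (∏ j, x j ^ α j) ≠ 0)).card ≤
      (Finset.univ.filter (fun j => x j ≠ 0)).card * S.card := by
  intro S
  classical
  set K : Finset (Fin n) := Finset.univ.filter (fun j => x j ≠ 0) with hKdef
  have hsub : S.filter (fun α => (∏ j, x j ^ α j) ≠ 0) ⊆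
      S.filter (fun α => ∀ j, α j ≠ 0 → j ∈ K) := by
    intro α hα
    rw [mem_filter] at hα ⊢
    refine ⟨hα.1, fun j hj => ?_⟩
    rw [hKdef, mem_filter]
    refine ⟨mem_univ j, fun hx => ?_⟩
    exact hα.2 (Finset.prod_eq_zero (mem_univ j) (by rw [hx]; exact zero_pow hj))
  have hScard : S.card = ∑ q ∈ Finset.Icc 1 d, Nat.multichoose n q := by
    have := key_count n d (Finset.univ : Finset (Fin n))
    rw [Finset.filter_true_of_mem (fun α _ => fun j _ => mem_univ j)] at this
    simpa using this
  calc n * (S.filter (fun α => (∏ j, x j ^ α j) ≠ 0)).card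
      ≤ n * (S.filter (fun α => ∀ j, α j ≠ 0 → j ∈ K)).card :=
        Nat.mul_le_mul_left n (Finset.card_le_card hsub)
    _ = n * ∑ q ∈ Finset.Icc 1 d, Nat.multichoose K.card q := by rw [key_count n d K]
    _ = ∑ q ∈ Finset.Icc 1 d, n * Nat.multichoose K.card q := Finset.mul_sum _ _ _
    _ ≤ ∑ q ∈ Finset.Icc 1 d, K.card * Nat.multichoose n q := by
        refine Finset.sum_le_sum fun q hq => ?_
        exact mc_ineq K.card n q (by simpa using Finset.card_le_card (Finset.subset_univ K))
          (mem_Icc.mp hq).1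
    _ = K.card * ∑ q ∈ Finset.Icc 1 d, Nat.multichoose n q := (Finset.mul_sum _ _ _).symm
    _ = K.card * S.card := by rw [hScard]
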